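/- arXiv:2503.06178 — 2 statements merged into one kernel-verified Lean document; each statement's English description precedes it below -/
import Mathlib

section
/- The spectral radius of the matrix A = F V^{-1}, where F = [[β, 0], [0, 0]] and V = [[ρ+ν, -ζ], [-ρ, ζ]] with β, ν, ρ, ζ > 0, equals β/ν. -/
open Matrix

lemma siqs_aux_inv (ν ρ ζ : ℝ) (hν : 0 < ν) (hρ : 0 < ρ) (hζ : 0 < ζ) :
    (!![ρ + ν, -ζ; -ρ, ζ] : Matrix (Fin 2) (Fin 2) ℝ)⁻¹ =
      !![1/ν, 1/ν; ρ/(ζ*ν), (ρ+ν)/(ζ*ν)] := by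
  apply inv_eq_right_inv
  ext i j
  fin_cases i <;> fin_cases j <;>
    simp [Matrix.mul_apply, Fin.sum_univ_two, Matrix.one_apply] <;>
    field_simp <;> ring

lemma siqs_spec (a : ℝ) :
    spectrum ℝ (!![a, a; 0, 0] : Matrix (Fin 2) (Fin 2) ℝ) = {a, 0} := by
  ext μ
  rw [spectrum.mem_iff, Matrix.isUnit_iff_isUnit_det, isUnit_iff_ne_zero, not_ne_iff]
  have : (algebraMap ℝ (Matrix (Fin 2) (Fin 2) ℝ) μ - !![a, a; 0, 0]) =
      !![μ - a, -a; 0, μ] := by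
    ext i j
    fin_cases i <;> fin_cases j <;>
      simp [Matrix.algebraMap_matrix_apply, Matrix.one_apply]
  rw [this, Matrix.det_fin_two_of]
  constructor
  · intro h
    rcases mul_eq_zero.mp (by linarith [h] : (μ - a) * μ = 0) with h | h
    · left; linarith
    · right; exact h
  · rintro (rfl | rfl) <;> ring

/-- The spectral radius of the next-generation matrix `A = F V⁻¹` of the SIQS model,
with `F = !![β,0;0,0]` and `V = !![ρ+ν,-ζ;-ρ,ζ]`, equals `β/ν`. -/
theorem siqs_spectral_radius (β ν ρ ζ : ℝ) (hβ : 0 < β) (hν : 0 < ν) (hρ : 0 < ρ)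
    (hζ : 0 < ζ) :
    sSup {r : ℝ | ∃ μ ∈ spectrum ℝ ((!![β, 0; 0, 0] : Matrix (Fin 2) (Fin 2) ℝ) *
      (!![ρ + ν, -ζ; -ρ, ζ] : Matrix (Fin 2) (Fin 2) ℝ)⁻¹), r = |μ|} = β / ν := by
  have hA : (!![β, 0; 0, 0] : Matrix (Fin 2) (Fin 2) ℝ) *
      (!![ρ + ν, -ζ; -ρ, ζ] : Matrix (Fin 2) (Fin 2) ℝ)⁻¹ = !![β/ν, β/ν; 0, 0] := by
    rw [siqs_aux_inv ν ρ ζ hν hρ hζ]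
    ext i j
    fin_cases i <;> fin_cases j <;>
      simp [Matrix.mul_apply, Fin.sum_univ_two] <;> ring
  rw [hA, siqs_spec]
  have hset : {r : ℝ | ∃ μ ∈ ({β/ν, 0} : Set ℝ), r = |μ|} = {β/ν, 0} := by
    ext r
    have h1 : |β/ν| = β/ν := abs_of_pos (div_pos hβ hν)
    simp only [Set.mem_setOf_eq, Set.mem_insert_iff, Set.mem_singleton_iff]
    constructor
    · rintro ⟨μ, (rfl | rfl), rfl⟩ <;> simp [h1]
    · rintro (rfl | rfl)
      exacts [⟨β/ν, Or.inl rfl, h1.symm⟩, ⟨0, Or.inr rfl, abs_zero.symm⟩]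
  rw [hset, csSup_pair]
  exact sup_eq_left.mpr (le_of_lt (div_pos hβ hν))
end

section
/- Let β, ν, ζ, ρ > 0, N ∈ ℕ, and let p_{i,j}(t) for i,j ≥ 0, i+j ≤ N solve the SIQS master equations. Define r_ℓ = ∑_{i=0}^{ℓ} p_{i,ℓ-i}. Then d/dt r_ℓ = -(β(N-ℓ)/N + ν)·m_ℓ + (β/N)(N-(ℓ-1))·m_{ℓ-1} + ν·m_{ℓ+1}, where m_ℓ = ∑_{i=0}^{ℓ} i·p_{i,ℓ-i}; in particular, the fast rates ζ and ρ do not appear explicitly in the equation for r_ℓ. -/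
open Finset

lemma siqs_key (β ν ζ ρ : ℝ) (N : ℕ) (q : ℕ → ℕ → ℝ) (ℓ : ℕ) :
    (-(β * ((N : ℝ) - ℓ) / N + ν) *
        (∑ i ∈ Finset.range (ℓ + 1), (i : ℝ) * q i (ℓ - i)) +
      (if ℓ = 0 then 0 else
        β / N * ((N : ℝ) - ((ℓ : ℝ) - 1)) *
          (∑ i ∈ Finset.range ℓ, (i : ℝ) * q i (ℓ - 1 - i))) +
      ν * (∑ i ∈ Finset.range (ℓ + 2), (i : ℝ) * q i (ℓ + 1 - i))) =
    ∑ i ∈ Finset.range (ℓ + 1),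
      (-(β * i * ((N : ℝ) - i - ((ℓ - i : ℕ) : ℝ)) / N + ν * i + ζ * i + ρ * ((ℓ - i : ℕ) : ℝ)) * q i (ℓ - i) +
        (if i = 0 then 0 else
          β * ((i : ℝ) - 1) * ((N : ℝ) - ((i : ℝ) - 1) - ((ℓ - i : ℕ) : ℝ)) / N * q (i - 1) (ℓ - i)) +
        ν * ((i : ℝ) + 1) * q (i + 1) (ℓ - i) +
        (if ℓ - i = 0 then 0 else ζ * ((i : ℝ) + 1) * q (i + 1) (ℓ - i - 1)) +
        (if i = 0 then 0 else ρ * (((ℓ - i : ℕ) : ℝ) + 1) * q (i - 1) (ℓ - i + 1))) := by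
  rw [Finset.sum_add_distrib, Finset.sum_add_distrib, Finset.sum_add_distrib,
    Finset.sum_add_distrib]
  have hA : ∑ i ∈ Finset.range (ℓ + 1),
      (-(β * i * ((N : ℝ) - i - ((ℓ - i : ℕ) : ℝ)) / N + ν * i + ζ * i + ρ * ((ℓ - i : ℕ) : ℝ)) * q i (ℓ - i))
      = (-(β * ((N : ℝ) - ℓ) / N + ν) - ζ) * ∑ i ∈ Finset.range (ℓ + 1), (i : ℝ) * q i (ℓ - i)
        - ρ * ∑ i ∈ Finset.range (ℓ + 1), ((ℓ : ℝ) - i) * q i (ℓ - i) := by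
    rw [Finset.mul_sum, Finset.mul_sum, ← Finset.sum_sub_distrib]
    refine Finset.sum_congr rfl fun i hi => ?_
    have hi' : i ≤ ℓ := by simpa [Nat.lt_succ_iff] using Finset.mem_range.mp hi
    rw [Nat.cast_sub hi']
    ring
  have hB : ∑ i ∈ Finset.range (ℓ + 1),
      (if i = 0 then 0 else
        β * ((i : ℝ) - 1) * ((N : ℝ) - ((i : ℝ) - 1) - ((ℓ - i : ℕ) : ℝ)) / N * q (i - 1) (ℓ - i))
      = (if ℓ = 0 then 0 else
        β / N * ((N : ℝ) - ((ℓ : ℝ) - 1)) * (∑ i ∈ Finset.range ℓ, (i : ℝ) * q i (ℓ - 1 - i))) := by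
    rcases Nat.eq_zero_or_pos ℓ with h0 | h0
    · subst h0; simp
    · rw [if_neg h0.ne', Finset.sum_range_succ']
      simp only [↓reduceIte, Nat.succ_ne_zero, ite_false, add_zero, Nat.add_sub_cancel]
      rw [Finset.mul_sum]
      refine Finset.sum_congr rfl fun i hi => ?_
      have hi' : i < ℓ := Finset.mem_range.mp hi
      have h1 : ℓ - (i + 1) = ℓ - 1 - i := by omega
      have h2 : ((ℓ - (i + 1) : ℕ) : ℝ) = (ℓ : ℝ) - 1 - i := by
        rw [Nat.cast_sub (by omega)]; push_cast; ring
      rw [h1] at h2 ⊢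
      rw [h2]
      push_cast
      ring
  have hC : ∑ i ∈ Finset.range (ℓ + 1), ν * ((i : ℝ) + 1) * q (i + 1) (ℓ - i)
      = ν * ∑ i ∈ Finset.range (ℓ + 2), (i : ℝ) * q i (ℓ + 1 - i) := by
    rw [Finset.sum_range_succ' (fun i => (i : ℝ) * q i (ℓ + 1 - i)) (ℓ + 1)]
    simp only [Nat.cast_zero, zero_mul, add_zero, Nat.succ_sub_succ]
    rw [Finset.mul_sum]
    refine Finset.sum_congr rfl fun i hi => ?_
    push_cast
    ring
  have hD : ∑ i ∈ Finset.range (ℓ + 1),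
      (if ℓ - i = 0 then 0 else ζ * ((i : ℝ) + 1) * q (i + 1) (ℓ - i - 1))
      = ζ * ∑ i ∈ Finset.range (ℓ + 1), (i : ℝ) * q i (ℓ - i) := by
    rw [Finset.sum_range_succ, Finset.sum_range_succ' (fun i => (i : ℝ) * q i (ℓ - i)) ℓ]
    simp only [Nat.sub_self, ↓reduceIte, add_zero, Nat.cast_zero, zero_mul, mul_zero]
    rw [Finset.mul_sum]
    refine Finset.sum_congr rfl fun i hi => ?_
    have hi' : i < ℓ := Finset.mem_range.mp hi
    rw [if_neg (by omega)]
    have : ℓ - (i + 1) = ℓ - i - 1 := by omega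
    rw [this]
    push_cast
    ring
  have hE : ∑ i ∈ Finset.range (ℓ + 1),
      (if i = 0 then 0 else ρ * (((ℓ - i : ℕ) : ℝ) + 1) * q (i - 1) (ℓ - i + 1))
      = ρ * ∑ i ∈ Finset.range (ℓ + 1), ((ℓ : ℝ) - i) * q i (ℓ - i) := by
    rw [Finset.sum_range_succ', Finset.sum_range_succ (fun i => ((ℓ : ℝ) - i) * q i (ℓ - i)) ℓ]
    simp only [↓reduceIte, add_zero, sub_self, zero_mul, mul_zero]
    rw [Finset.mul_sum]
    refine Finset.sum_congr rfl fun i hi => ?_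
    have hi' : i < ℓ := Finset.mem_range.mp hi
    rw [if_neg (Nat.succ_ne_zero _)]
    have h1 : ℓ - (i + 1) + 1 = ℓ - i := by omega
    have h2 : ((ℓ - (i + 1) : ℕ) : ℝ) + 1 = (ℓ : ℝ) - i := by
      rw [Nat.cast_sub (by omega)]; push_cast; ring
    simp only [Nat.add_sub_cancel, h1, h2]
    ring
  rw [hA, hB, hC, hD, hE]
  ring

/-- Summing the SIQS master equations along the diagonals `i + j = ℓ`: with
`r_ℓ = ∑_{i=0}^ℓ p_{i,ℓ-i}` and `m_ℓ = ∑_{i=0}^ℓ i p_{i,ℓ-i}`, the fast rates `ζ, ρ`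
cancel and `d/dt r_ℓ = -(β(N-ℓ)/N + ν) m_ℓ + (β/N)(N-(ℓ-1)) m_{ℓ-1} + ν m_{ℓ+1}`. -/
theorem siqs_diagonal_sum_master_equation (β ν ζ ρ : ℝ) (N : ℕ)
    (hβ : 0 < β) (hν : 0 < ν) (hζ : 0 < ζ) (hρ : 0 < ρ)
    (p : ℝ → ℕ → ℕ → ℝ)
    (hzero : ∀ t : ℝ, ∀ i j : ℕ, N < i + j → p t i j = 0)
    (hode : ∀ t : ℝ, ∀ i j : ℕ, i + j ≤ N → HasDerivAt (fun t => p t i j)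
      (-(β * i * ((N : ℝ) - i - j) / N + ν * i + ζ * i + ρ * j) * p t i j +
        (if i = 0 then 0 else
          β * ((i : ℝ) - 1) * ((N : ℝ) - ((i : ℝ) - 1) - j) / N * p t (i - 1) j) +
        ν * ((i : ℝ) + 1) * p t (i + 1) j +
        (if j = 0 then 0 else ζ * ((i : ℝ) + 1) * p t (i + 1) (j - 1)) +
        (if i = 0 then 0 else ρ * ((j : ℝ) + 1) * p t (i - 1) (j + 1))) t) :
    ∀ t : ℝ, ∀ ℓ : ℕ, ℓ ≤ N →
      HasDerivAt (fun t => ∑ i ∈ Finset.range (ℓ + 1), p t i (ℓ - i))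
        (-(β * ((N : ℝ) - ℓ) / N + ν) *
            (∑ i ∈ Finset.range (ℓ + 1), (i : ℝ) * p t i (ℓ - i)) +
          (if ℓ = 0 then 0 else
            β / N * ((N : ℝ) - ((ℓ : ℝ) - 1)) *
              (∑ i ∈ Finset.range ℓ, (i : ℝ) * p t i (ℓ - 1 - i))) +
          ν * (∑ i ∈ Finset.range (ℓ + 2), (i : ℝ) * p t i (ℓ + 1 - i))) t := by
  intro t ℓ hℓ
  have h : HasDerivAt (fun t => ∑ i ∈ Finset.range (ℓ + 1), p t i (ℓ - i))
      (∑ i ∈ Finset.range (ℓ + 1),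
        (-(β * i * ((N : ℝ) - i - ((ℓ - i : ℕ) : ℝ)) / N + ν * i + ζ * i
              + ρ * ((ℓ - i : ℕ) : ℝ)) * p t i (ℓ - i) +
          (if i = 0 then 0 else
            β * ((i : ℝ) - 1) * ((N : ℝ) - ((i : ℝ) - 1) - ((ℓ - i : ℕ) : ℝ)) / N
              * p t (i - 1) (ℓ - i)) +
          ν * ((i : ℝ) + 1) * p t (i + 1) (ℓ - i) +
          (if ℓ - i = 0 then 0 else ζ * ((i : ℝ) + 1) * p t (i + 1) (ℓ - i - 1)) +
          (if i = 0 then 0 else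
            ρ * (((ℓ - i : ℕ) : ℝ) + 1) * p t (i - 1) (ℓ - i + 1)))) t := by
    refine HasDerivAt.fun_sum fun i hi => ?_
    have hi' : i ≤ ℓ := by simpa [Nat.lt_succ_iff] using Finset.mem_range.mp hi
    exact hode t i (ℓ - i) (by omega)
  rw [siqs_key β ν ζ ρ N (p t) ℓ]
  exact h
end
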